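/- Let T > 0, θ > 0, N ≥ 1, let 0 < t_1 < t_2 < … < t_N ≤ T, and let v_1, …, v_N ∈ {−θ, +θ}. Then there exists f ∈ F[0,T] whose SOD sampling times for threshold θ are exactly t_1, …, t_N and whose SOD output is Φ_θ(f) = Σ_{k=1}^{N} v_k · 1_{{t_k}}. In other words, every finitely supported function taking only the values ±θ on its support, with support contained in (0,T], lies in E_θ[0,T]. -/

import Mathlib

open Set Function Filter Classical

/-- The next SOD sampling time after time `s` for input `f`, threshold `θ`, on `[0,T]`:
the infimum of `{t ∈ (s,T] : |f t - f s| ≥ θ}` if this set is nonempty, `none` otherwise. -/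
noncomputable def sodNext (T θ : ℝ) (f : ℝ → ℝ) (s : ℝ) : Option ℝ :=
  if (∃ t ∈ Set.Ioc s T, θ ≤ |f t - f s|) then
    some (sInf {t | t ∈ Set.Ioc s T ∧ θ ≤ |f t - f s|})
  else none

/-- The `k`-th SOD sampling time (`t_0 = 0`), `none` if the recursion has stopped before `k`. -/
noncomputable def sodTime (T θ : ℝ) (f : ℝ → ℝ) : ℕ → Option ℝ
  | 0 => some 0
  | n + 1 => (sodTime T θ f n).bind (sodNext T θ f)

/-- The SOD output event sequence `Φ_θ(f)` : it takes the value `f t_k - f t_{k-1}` at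
each sampling time `t_k`, `k ≥ 1`, and `0` elsewhere. -/
noncomputable def sodOut (T θ : ℝ) (f : ℝ → ℝ) : ℝ → ℝ := fun t =>
  if h : ∃ k : ℕ, ∃ s : ℝ, sodTime T θ f k = some s ∧ sodNext T θ f s = some t
  then f t - f h.choose_spec.choose
  else 0

/-- Membership in `F[0,T]`: continuous on `[0,T]` with `f 0 = 0`. -/
def memF (T : ℝ) (f : ℝ → ℝ) : Prop :=
  ContinuousOn f (Set.Icc 0 T) ∧ f 0 = 0

/-- An event sequence on `[0,T]`: finitely supported with support in `[0,T]`. -/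
def IsEventSeq (T : ℝ) (η : ℝ → ℝ) : Prop :=
  (Function.support η).Finite ∧ Function.support η ⊆ Set.Icc 0 T

/-- `η` is `±1`-valued on its support. -/
def IsPM (η : ℝ → ℝ) : Prop :=
  ∀ t ∈ Function.support η, η t = 1 ∨ η t = -1

/-- Weyl's discrepancy norm `‖η‖_D = sup_{0 ≤ a ≤ b ≤ T} |Σ_{t ∈ [a,b]} η t|`. -/
noncomputable def discNorm (T : ℝ) (η : ℝ → ℝ) : ℝ :=
  sSup {x | ∃ a b : ℝ, 0 ≤ a ∧ a ≤ b ∧ b ≤ T ∧ x = |∑ᶠ t ∈ Set.Icc a b, η t|}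

/-- Alexiewicz norm `‖η‖_A = sup_{a ∈ [0,T]} |Σ_{t ∈ [0,a]} η t|`. -/
noncomputable def alexNorm (T : ℝ) (η : ℝ → ℝ) : ℝ :=
  sSup {x | ∃ a : ℝ, 0 ≤ a ∧ a ≤ T ∧ x = |∑ᶠ t ∈ Set.Icc 0 a, η t|}

/-- The values of `η` at consecutive support points alternate in sign. -/
def Alternating (η : ℝ → ℝ) : Prop :=
  ∀ s u : ℝ, s ∈ Function.support η → u ∈ Function.support η → s < u →
    (∀ t ∈ Function.support η, ¬ (s < t ∧ t < u)) → η s * η u < 0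

/-- One `(+−)`-transcription step: erase a `+1` followed (with no support in between) by a `−1`. -/
def StepPM (η η' : ℝ → ℝ) : Prop :=
  ∃ s u : ℝ, s < u ∧ η s = 1 ∧ η u = -1 ∧ (∀ t : ℝ, s < t → t < u → η t = 0) ∧
    η' = Function.update (Function.update η s 0) u 0

/-- One `(−+)`-transcription step: erase a `−1` followed (with no support in between) by a `+1`. -/
def StepMP (η η' : ℝ → ℝ) : Prop :=
  ∃ s u : ℝ, s < u ∧ η s = -1 ∧ η u = 1 ∧ (∀ t : ℝ, s < t → t < u → η t = 0) ∧
    η' = Function.update (Function.update η s 0) u 0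

/-- `StepsN R n x y` : `y` is obtained from `x` by `n` successive `R`-steps. -/
def StepsN (R : (ℝ → ℝ) → (ℝ → ℝ) → Prop) : ℕ → (ℝ → ℝ) → (ℝ → ℝ) → Prop
  | 0, x, y => x = y
  | n + 1, x, z => ∃ y, R x y ∧ StepsN R n y z

/-- Uniform distance `‖f − g‖_∞` over `[0,T]`. -/
noncomputable def unifDist (T : ℝ) (f g : ℝ → ℝ) : ℝ :=
  sSup {x | ∃ t ∈ Set.Icc 0 T, x = |f t - g t|}

/-- Clamped linear ramp from `0` at `a` to `1` at `b`. -/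
noncomputable def ramp (a b x : ℝ) : ℝ := max 0 (min 1 ((x - a) / (b - a)))

lemma ramp_continuous (a b : ℝ) : Continuous (ramp a b) :=
  continuous_const.max (continuous_const.min ((continuous_id.sub continuous_const).div_const _))

lemma ramp_of_le {a b x : ℝ} (h : x ≤ a) (hab : a < b) : ramp a b x = 0 := by
  have hq : (x - a) / (b - a) ≤ 0 :=
    div_nonpos_of_nonpos_of_nonneg (by linarith) (by linarith)
  unfold ramp
  rw [min_eq_right (by linarith), max_eq_left hq]

lemma ramp_of_ge {a b x : ℝ} (h : b ≤ x) (hab : a < b) : ramp a b x = 1 := by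
  have hq : (1 : ℝ) ≤ (x - a) / (b - a) := (one_le_div (by linarith)).2 (by linarith)
  unfold ramp
  rw [min_eq_left hq, max_eq_right zero_le_one]

lemma ramp_eq {a b x : ℝ} (h1 : a ≤ x) (h2 : x ≤ b) (hab : a < b) :
    ramp a b x = (x - a) / (b - a) := by
  have hq0 : (0 : ℝ) ≤ (x - a) / (b - a) := div_nonneg (by linarith) (by linarith)
  have hq1 : (x - a) / (b - a) ≤ 1 := (div_le_one (by linarith)).2 (by linarith)
  unfold ramp
  rw [min_eq_right hq1, max_eq_right hq0]

lemma sodNext_eq_some (T θ : ℝ) (f : ℝ → ℝ) (s u : ℝ)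
    (hmem : u ∈ Set.Ioc s T) (habs : θ ≤ |f u - f s|)
    (hmin : ∀ x ∈ Set.Ioc s T, θ ≤ |f x - f s| → u ≤ x) :
    sodNext T θ f s = some u := by
  rw [sodNext, if_pos ⟨u, hmem, habs⟩]
  congr 1
  apply le_antisymm
  · exact csInf_le ⟨u, fun x hx => hmin x hx.1 hx.2⟩ ⟨hmem, habs⟩
  · exact le_csInf ⟨u, hmem, habs⟩ (fun x hx => hmin x hx.1 hx.2)

lemma sodNext_eq_none (T θ : ℝ) (f : ℝ → ℝ) (s : ℝ)
    (h : ∀ x ∈ Set.Ioc s T, |f x - f s| < θ) :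
    sodNext T θ f s = none := by
  rw [sodNext, if_neg]
  rintro ⟨x, hx, habs⟩
  exact absurd habs (not_le.2 (h x hx))

lemma sodTime_succ (T θ : ℝ) (f : ℝ → ℝ) (n : ℕ) :
    sodTime T θ f (n + 1) = (sodTime T θ f n).bind (sodNext T θ f) := rfl

/-- surjectivity of SOD onto event sequences: for prescribed times
`0 < t_1 < … < t_N ≤ T` and values `v_k ∈ {−θ,+θ}` there is `f ∈ F[0,T]` whose SOD sampling
times for threshold `θ` are exactly `t_1, …, t_N` and with `Φ_θ(f) = Σ_k v_k 1_{{t_k}}`. -/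
theorem stmt15 (T θ : ℝ) (hT : 0 < T) (hθ : 0 < θ) (N : ℕ) (hN : 1 ≤ N)
    (t : ℕ → ℝ) (hmono : ∀ k, 1 ≤ k → k < N → t k < t (k + 1))
    (h0 : 0 < t 1) (hTN : t N ≤ T)
    (v : ℕ → ℝ) (hv : ∀ k, 1 ≤ k → k ≤ N → v k = θ ∨ v k = -θ) :
    ∃ f : ℝ → ℝ, memF T f ∧
      (∀ k, 1 ≤ k → k ≤ N → sodTime T θ f k = some (t k)) ∧
      sodTime T θ f (N + 1) = none ∧
      sodOut T θ f = fun s => ∑ k ∈ Finset.Icc 1 N, (if s = t k then v k else 0) := by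
  classical
  -- extended time sequence with `τ 0 = 0`
  set τ : ℕ → ℝ := fun k => if k = 0 then 0 else t k with hτdef
  have hτ0 : τ 0 = 0 := by simp [hτdef]
  have hτt : ∀ k, 1 ≤ k → τ k = t k := by
    intro k hk; simp [hτdef, Nat.one_le_iff_ne_zero.mp hk]
  -- step monotonicity
  have hstep : ∀ k, 1 ≤ k → k ≤ N → τ (k - 1) < τ k := by
    intro k hk1 hkN
    rcases Nat.eq_or_lt_of_le hk1 with h | h
    · rw [← h]; simpa [hτdef] using h0
    · have hk2 : 2 ≤ k := h
      have := hmono (k - 1) (by omega) (by omega)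
      rw [hτt (k-1) (by omega), hτt k (by omega)]
      have hkk : k - 1 + 1 = k := by omega
      rwa [hkk] at this
  have hτlt : ∀ j k, j < k → k ≤ N → τ j < τ k := by
    intro j k hjk hkN
    induction k with
    | zero => omega
    | succ n ih =>
      rcases Nat.lt_or_ge j n with h | h
      · exact lt_trans (ih h (by omega)) (by
          have := hstep (n+1) (by omega) hkN
          simpa using this)
      · have hjn : j = n := by omega
        subst hjn
        have := hstep (j+1) (by omega) hkN
        simpa using this
  have hτle : ∀ j k, j ≤ k → k ≤ N → τ j ≤ τ k := by
    intro j k hjk hkN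
    rcases Nat.eq_or_lt_of_le hjk with h | h
    · rw [h]
    · exact le_of_lt (hτlt j k h hkN)
  have hτT : ∀ k, k ≤ N → τ k ≤ T := by
    intro k hk
    calc τ k ≤ τ N := hτle k N hk le_rfl
    _ = t N := hτt N hN
    _ ≤ T := hTN
  have hτnonneg : ∀ k, k ≤ N → 0 ≤ τ k := by
    intro k hk
    rw [← hτ0]; exact hτle 0 k (Nat.zero_le _) hk
  have hτinj : ∀ j k, j ≤ N → k ≤ N → τ j = τ k → j = k := by
    intro j k hjN hkN h
    rcases lt_trichotomy j k with hlt | heq | hgt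
    · exact absurd h (ne_of_lt (hτlt j k hlt hkN))
    · exact heq
    · exact absurd h.symm (ne_of_lt (hτlt k j hgt hjN))
  -- the function
  set f : ℝ → ℝ := fun x => ∑ k ∈ Finset.Icc 1 N, v k * ramp (τ (k - 1)) (τ k) x with hfdef
  have habsv : ∀ k, 1 ≤ k → k ≤ N → |v k| = θ := by
    intro k hk1 hkN
    rcases hv k hk1 hkN with h | h <;> rw [h] <;>
      [exact abs_of_pos hθ; simpa using abs_of_pos hθ]
  -- the key difference computation
  have hdiff : ∀ j, 1 ≤ j → j ≤ N → ∀ x, τ (j - 1) ≤ x → x ≤ τ j →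
      f x - f (τ (j - 1)) = v j * ((x - τ (j - 1)) / (τ j - τ (j - 1))) := by
    intro j hj1 hjN x hx1 hx2
    have hsplit : f x - f (τ (j - 1)) = ∑ k ∈ Finset.Icc 1 N,
        (v k * ramp (τ (k - 1)) (τ k) x - v k * ramp (τ (k - 1)) (τ k) (τ (j - 1))) := by
      rw [hfdef, Finset.sum_sub_distrib]
    rw [hsplit, Finset.sum_eq_single_of_mem j (Finset.mem_Icc.2 ⟨hj1, hjN⟩)]
    · rw [ramp_eq hx1 hx2 (hstep j hj1 hjN), ramp_of_le le_rfl (hstep j hj1 hjN),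
        mul_zero, sub_zero]
    · intro k hk hkj
      obtain ⟨hk1, hkN⟩ := Finset.mem_Icc.1 hk
      rcases lt_or_gt_of_ne hkj with h | h
      · -- k < j : both ramps are 1
        have hτk : τ k ≤ τ (j - 1) := hτle k (j - 1) (by omega) (by omega)
        rw [ramp_of_ge (le_trans hτk hx1) (hstep k hk1 hkN),
          ramp_of_ge hτk (hstep k hk1 hkN)]
        ring
      · -- k > j : both ramps are 0
        have hτk : τ j ≤ τ (k - 1) := hτle j (k - 1) (by omega) (by omega)
        rw [ramp_of_le (le_trans hx2 hτk) (hstep k hk1 hkN),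
          ramp_of_le (le_trans (le_trans hx1 hx2) hτk) (hstep k hk1 hkN)]
        ring
  have hjump : ∀ j, 1 ≤ j → j ≤ N → f (τ j) - f (τ (j - 1)) = v j := by
    intro j hj1 hjN
    have hlt := hstep j hj1 hjN
    rw [hdiff j hj1 hjN (τ j) (le_of_lt hlt) le_rfl, div_self (by linarith), mul_one]
  have habs_lt : ∀ j, 1 ≤ j → j ≤ N → ∀ x, τ (j - 1) ≤ x → x < τ j →
      |f x - f (τ (j - 1))| < θ := by
    intro j hj1 hjN x hx1 hx2
    have hlt := hstep j hj1 hjN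
    rw [hdiff j hj1 hjN x hx1 (le_of_lt hx2), abs_mul, habsv j hj1 hjN]
    have hr0 : 0 ≤ (x - τ (j - 1)) / (τ j - τ (j - 1)) :=
      div_nonneg (by linarith) (by linarith)
    have hr1 : (x - τ (j - 1)) / (τ j - τ (j - 1)) < 1 :=
      (div_lt_one (by linarith)).2 (by linarith)
    rw [abs_of_nonneg hr0]
    nlinarith
  have hconst : ∀ x, τ N ≤ x → f x = ∑ k ∈ Finset.Icc 1 N, v k := by
    intro x hx
    rw [hfdef]
    apply Finset.sum_congr rfl
    intro k hk
    obtain ⟨hk1, hkN⟩ := Finset.mem_Icc.1 hk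
    rw [ramp_of_ge (le_trans (hτle k N hkN le_rfl) hx) (hstep k hk1 hkN), mul_one]
  -- sodNext computations
  have hnext : ∀ j, j < N → sodNext T θ f (τ j) = some (τ (j + 1)) := by
    intro j hj
    have hj1 : (j + 1) - 1 = j := by omega
    apply sodNext_eq_some
    · exact ⟨hτlt j (j+1) (by omega) (by omega), hτT (j+1) (by omega)⟩
    · have := hjump (j+1) (by omega) (by omega)
      rw [hj1] at this
      rw [this, habsv (j+1) (by omega) (by omega)]
    · intro x hx habs
      by_contra hc
      push_neg at hc
      have := habs_lt (j+1) (by omega) (by omega) x (by rw [hj1]; exact le_of_lt hx.1)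
        (by rwa [] at hc)
      rw [hj1] at this
      exact absurd habs (not_le.2 this)
  have hnextN : sodNext T θ f (τ N) = none := by
    apply sodNext_eq_none
    intro x hx
    rw [hconst x (le_of_lt hx.1), hconst (τ N) le_rfl]
    simpa using hθ
  -- sodTime computations
  have hsodTime : ∀ k, k ≤ N → sodTime T θ f k = some (τ k) := by
    intro k
    induction k with
    | zero => intro _; rw [hτ0]; rfl
    | succ n ih =>
      intro h
      rw [sodTime_succ, ih (by omega)]
      exact hnext n (by omega)
  have hsodTop : sodTime T θ f (N + 1) = none := by
    rw [sodTime_succ, hsodTime N le_rfl]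
    exact hnextN
  have hsodNone : ∀ k, N < k → sodTime T θ f k = none := by
    intro k hk
    induction k with
    | zero => omega
    | succ n ih =>
      rcases Nat.lt_or_ge N n with h | h
      · rw [sodTime_succ, ih h]; rfl
      · have : n = N := by omega
        rw [this]; exact hsodTop
  have hclass : ∀ j s, sodTime T θ f j = some s → j ≤ N ∧ s = τ j := by
    intro j s h
    by_cases hj : j ≤ N
    · rw [hsodTime j hj] at h
      exact ⟨hj, (Option.some_inj.1 h).symm⟩
    · rw [hsodNone j (by omega)] at h
      exact absurd h (by simp)
  refine ⟨f, ⟨((continuous_finset_sum _ (fun k _ =>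
    continuous_const.mul (ramp_continuous _ _))).continuousOn), ?_⟩, ?_, hsodTop, ?_⟩
  · -- f 0 = 0
    rw [hfdef]
    apply Finset.sum_eq_zero
    intro k hk
    obtain ⟨hk1, hkN⟩ := Finset.mem_Icc.1 hk
    rw [ramp_of_le (hτnonneg (k-1) (by omega)) (hstep k hk1 hkN), mul_zero]
  · intro k hk1 hkN
    rw [hsodTime k hkN, hτt k hk1]
  · -- sodOut equality
    funext x
    rw [sodOut]
    by_cases hx : ∃ k, 1 ≤ k ∧ k ≤ N ∧ x = t k
    · obtain ⟨k, hk1, hkN, hxk⟩ := hx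
      have hxτ : x = τ k := by rw [hxk, hτt k hk1]
      have hex : ∃ m : ℕ, ∃ s : ℝ, sodTime T θ f m = some s ∧ sodNext T θ f s = some x := by
        refine ⟨k - 1, τ (k - 1), hsodTime _ (by omega), ?_⟩
        have := hnext (k - 1) (by omega)
        have hkk : k - 1 + 1 = k := by omega
        rw [hkk] at this
        rw [hxτ]; exact this
      rw [dif_pos hex]
      obtain ⟨h1, h2⟩ := hex.choose_spec.choose_spec
      obtain ⟨hm, hs⟩ := hclass _ _ h1
      have hmN : hex.choose < N := by
        rcases Nat.lt_or_ge hex.choose N with h | h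
        · exact h
        · exfalso
          have : hex.choose = N := by omega
          rw [hs, this, hnextN] at h2
          exact absurd h2 (by simp)
      rw [hs, hnext _ hmN] at h2
      have hτeq : τ (hex.choose + 1) = x := Option.some_inj.1 h2
      have hk' : hex.choose + 1 = k := hτinj _ _ (by omega) hkN (hτeq.trans hxτ)
      rw [Finset.sum_eq_single_of_mem k (Finset.mem_Icc.2 ⟨hk1, hkN⟩)]
      · rw [if_pos hxk, hs]
        have hck : hex.choose = k - 1 := by omega
        have hcc : τ hex.choose = τ (k - 1) := congrArg τ hck
        rw [hcc, hxτ]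
        exact hjump k hk1 hkN
      · intro b hb hbk
        obtain ⟨hb1, hbN⟩ := Finset.mem_Icc.1 hb
        rw [if_neg]
        intro hxb
        exact hbk (hτinj b k hbN hkN (by rw [hτt b hb1, ← hxb]; exact hxτ))
    · rw [dif_neg, Finset.sum_eq_zero]
      · intro k hk
        obtain ⟨hk1, hkN⟩ := Finset.mem_Icc.1 hk
        rw [if_neg]
        intro h
        exact hx ⟨k, hk1, hkN, h⟩
      · rintro ⟨m, s, h1, h2⟩
        obtain ⟨hm, hs⟩ := hclass _ _ h1
        rcases Nat.lt_or_ge m N with h | h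
        · rw [hs, hnext m h] at h2
          refine hx ⟨m + 1, by omega, by omega, ?_⟩
          rw [← Option.some_inj.1 h2, hτt (m+1) (by omega)]
        · have : m = N := by omega
          rw [hs, this, hnextN] at h2
          exact absurd h2 (by simp)
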